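/- For every integer L ≥ 1 and every 2L-tuple of fields v on ZMod N × ZMod M, there exists a unique zero-mean image u (i.e., Σ_{n,m} u(n,m) = 0) minimizing ‖∇_L u − v‖² = Σ_{k=0}^{L−1} Σ_{n,m} ( ((∇_L u)_x^k − v_x^k)(n,m)² + ((∇_L u)_y^k − v_y^k)(n,m)² ) over all zero-mean images, and a zero-mean image u is this minimizer if and only if it satisfies the normal equation L · div(∇u) = div_L(v). -/
import Mathlib


open Real

/-- Periodic discrete partial difference in the first (column) direction. -/
def gradX {N M : ℕ} (f : ZMod N × ZMod M → ℝ) : ZMod N × ZMod M → ℝ :=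
  fun p => f p - f (p.1 - 1, p.2)

/-- Periodic discrete partial difference in the second (row) direction. -/
def gradY {N M : ℕ} (f : ZMod N × ZMod M → ℝ) : ZMod N × ZMod M → ℝ :=
  fun p => f p - f (p.1, p.2 - 1)

/-- Periodic discrete divergence of a pair of fields `(vx, vy)`. -/
def divg {N M : ℕ} (vx vy : ZMod N × ZMod M → ℝ) : ZMod N × ZMod M → ℝ :=
  fun p => vx (p.1 + 1, p.2) - vx p + (vy (p.1, p.2 + 1) - vy p)

/-- `x`-component of the multidirectional gradient in direction `θ_k = πk/(2L)`. -/
noncomputable def mgX {N M : ℕ} (L : ℕ) (u : ZMod N × ZMod M → ℝ) (k : Fin L) :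
    ZMod N × ZMod M → ℝ :=
  fun p => Real.cos (π * (k : ℝ) / (2 * (L : ℝ))) * gradX u p +
    Real.sin (π * (k : ℝ) / (2 * (L : ℝ))) * gradY u p

/-- `y`-component of the multidirectional gradient in direction `θ_k = πk/(2L)`. -/
noncomputable def mgY {N M : ℕ} (L : ℕ) (u : ZMod N × ZMod M → ℝ) (k : Fin L) :
    ZMod N × ZMod M → ℝ :=
  fun p => Real.cos (π * (k : ℝ) / (2 * (L : ℝ))) * gradY u p -
    Real.sin (π * (k : ℝ) / (2 * (L : ℝ))) * gradX u p

/-- Multidirectional divergence of a `2L`-tuple of fields. -/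
noncomputable def divL {N M : ℕ} (L : ℕ)
    (vx vy : Fin L → ZMod N × ZMod M → ℝ) : ZMod N × ZMod M → ℝ :=
  divg
    (fun p => ∑ k : Fin L,
      (Real.cos (π * (k : ℝ) / (2 * (L : ℝ))) * vx k p -
        Real.sin (π * (k : ℝ) / (2 * (L : ℝ))) * vy k p))
    (fun p => ∑ k : Fin L,
      (Real.sin (π * (k : ℝ) / (2 * (L : ℝ))) * vx k p +
        Real.cos (π * (k : ℝ) / (2 * (L : ℝ))) * vy k p))

/-- The squared distance `‖∇_L u − v‖²` between the multidirectional gradient of `u`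
and a `2L`-tuple of fields `v = (vx, vy)`. -/
noncomputable def Phi {N M : ℕ} [NeZero N] [NeZero M] (L : ℕ)
    (vx vy : Fin L → ZMod N × ZMod M → ℝ) (u : ZMod N × ZMod M → ℝ) : ℝ :=
  ∑ k : Fin L, ∑ p : ZMod N × ZMod M,
    ((mgX L u k p - vx k p) ^ 2 + (mgY L u k p - vy k p) ^ 2)

section
variable {N M : ℕ} [NeZero N] [NeZero M]

lemma sum_shiftX (f : ZMod N × ZMod M → ℝ) :
    ∑ p : ZMod N × ZMod M, f (p.1 + 1, p.2) = ∑ p : ZMod N × ZMod M, f p :=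
  Fintype.sum_equiv ((Equiv.addRight (1 : ZMod N)).prodCongr (Equiv.refl _)) _ f (fun _ => rfl)

lemma sum_shiftY (f : ZMod N × ZMod M → ℝ) :
    ∑ p : ZMod N × ZMod M, f (p.1, p.2 + 1) = ∑ p : ZMod N × ZMod M, f p :=
  Fintype.sum_equiv ((Equiv.refl _).prodCongr (Equiv.addRight (1 : ZMod M))) _ f (fun _ => rfl)

lemma sum_divg_zero (wx wy : ZMod N × ZMod M → ℝ) :
    ∑ p : ZMod N × ZMod M, divg wx wy p = 0 := by
  have hx := sum_shiftX wx
  have hy := sum_shiftY wy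
  simp only [divg, Finset.sum_add_distrib, Finset.sum_sub_distrib]
  rw [hx, hy]; ring

lemma parts (u wx wy : ZMod N × ZMod M → ℝ) :
    ∑ p : ZMod N × ZMod M, (gradX u p * wx p + gradY u p * wy p)
      = -∑ p : ZMod N × ZMod M, u p * divg wx wy p := by
  have h1 : ∑ p : ZMod N × ZMod M, u p * wx (p.1 + 1, p.2)
      = ∑ p : ZMod N × ZMod M, u (p.1 - 1, p.2) * wx p := by
    have := sum_shiftX (fun p : ZMod N × ZMod M => u (p.1 - 1, p.2) * wx p)
    simpa using this
  have h2 : ∑ p : ZMod N × ZMod M, u p * wy (p.1, p.2 + 1)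
      = ∑ p : ZMod N × ZMod M, u (p.1, p.2 - 1) * wy p := by
    have := sum_shiftY (fun p : ZMod N × ZMod M => u (p.1, p.2 - 1) * wy p)
    simpa using this
  simp only [gradX, gradY, divg, sub_mul, mul_sub, mul_add, Finset.sum_sub_distrib,
    Finset.sum_add_distrib, Finset.sum_neg_distrib, neg_sub, neg_add]
  rw [h1, h2]

end
section
variable {N M : ℕ} [NeZero N] [NeZero M]

/-- Dirichlet energy. -/
noncomputable def Su (u : ZMod N × ZMod M → ℝ) : ℝ :=
  ∑ p : ZMod N × ZMod M, ((gradX u p) ^ 2 + (gradY u p) ^ 2)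

lemma Su_nonneg (u : ZMod N × ZMod M → ℝ) : 0 ≤ Su u :=
  Finset.sum_nonneg fun p _ => by positivity

lemma energy (L : ℕ) (u : ZMod N × ZMod M → ℝ) :
    ∑ k : Fin L, ∑ p : ZMod N × ZMod M, ((mgX L u k p) ^ 2 + (mgY L u k p) ^ 2)
      = (L : ℝ) * Su u := by
  have h : ∀ k : Fin L, ∑ p : ZMod N × ZMod M, ((mgX L u k p) ^ 2 + (mgY L u k p) ^ 2) = Su u := by
    intro k
    apply Finset.sum_congr rfl
    intro p _
    have hsc := Real.sin_sq_add_cos_sq (π * (k : ℝ) / (2 * (L : ℝ)))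
    simp only [mgX, mgY]
    nlinarith [hsc]
  simp [h, Finset.sum_const, mul_comm]

lemma cross (L : ℕ) (vx vy : Fin L → ZMod N × ZMod M → ℝ) (u : ZMod N × ZMod M → ℝ) :
    ∑ k : Fin L, ∑ p : ZMod N × ZMod M, (mgX L u k p * vx k p + mgY L u k p * vy k p)
      = -∑ p : ZMod N × ZMod M, u p * divL L vx vy p := by
  rw [Finset.sum_comm]
  have h : ∀ p : ZMod N × ZMod M,
      ∑ k : Fin L, (mgX L u k p * vx k p + mgY L u k p * vy k p)
        = gradX u p * (∑ k : Fin L, (Real.cos (π * (k : ℝ) / (2 * (L : ℝ))) * vx k p -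
              Real.sin (π * (k : ℝ) / (2 * (L : ℝ))) * vy k p))
          + gradY u p * (∑ k : Fin L, (Real.sin (π * (k : ℝ) / (2 * (L : ℝ))) * vx k p +
              Real.cos (π * (k : ℝ) / (2 * (L : ℝ))) * vy k p)) := by
    intro p
    rw [Finset.mul_sum, Finset.mul_sum, ← Finset.sum_add_distrib]
    apply Finset.sum_congr rfl
    intro k _
    simp only [mgX, mgY]; ring
  simp only [h]
  exact parts u _ _

lemma Phi_eq (L : ℕ) (vx vy : Fin L → ZMod N × ZMod M → ℝ) (u : ZMod N × ZMod M → ℝ) :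
    Phi L vx vy u = (L : ℝ) * Su u + 2 * ∑ p : ZMod N × ZMod M, u p * divL L vx vy p
      + ∑ k : Fin L, ∑ p : ZMod N × ZMod M, ((vx k p) ^ 2 + (vy k p) ^ 2) := by
  have e1 : ∀ (k : Fin L) (p : ZMod N × ZMod M),
      (mgX L u k p - vx k p) ^ 2 + (mgY L u k p - vy k p) ^ 2
        = ((mgX L u k p) ^ 2 + (mgY L u k p) ^ 2)
          - 2 * (mgX L u k p * vx k p + mgY L u k p * vy k p)
          + ((vx k p) ^ 2 + (vy k p) ^ 2) := by intros; ring
  have hE : (∑ k : Fin L, ∑ p : ZMod N × ZMod M, (mgX L u k p) ^ 2)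
      + (∑ k : Fin L, ∑ p : ZMod N × ZMod M, (mgY L u k p) ^ 2) = (L : ℝ) * Su u := by
    simp only [← Finset.sum_add_distrib]; exact energy L u
  have hC : (∑ k : Fin L, ∑ p : ZMod N × ZMod M, mgX L u k p * vx k p)
      + (∑ k : Fin L, ∑ p : ZMod N × ZMod M, mgY L u k p * vy k p)
      = -∑ p : ZMod N × ZMod M, u p * divL L vx vy p := by
    simp only [← Finset.sum_add_distrib]; exact cross L vx vy u
  simp only [Phi, e1, Finset.sum_add_distrib, Finset.sum_sub_distrib, ← Finset.mul_sum]
  rw [hE, hC]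
  ring

end
section
variable {N M : ℕ} [NeZero N] [NeZero M]

lemma Su_expand (u w : ZMod N × ZMod M → ℝ) :
    Su w = Su u + Su (fun p => w p - u p)
      - 2 * ∑ p : ZMod N × ZMod M,
          (w p - u p) * divg (gradX u) (gradY u) p := by
  have hB : ∑ p : ZMod N × ZMod M,
      (gradX (fun q => w q - u q) p * gradX u p + gradY (fun q => w q - u q) p * gradY u p)
        = -∑ p : ZMod N × ZMod M, (w p - u p) * divg (gradX u) (gradY u) p :=
    parts (fun q => w q - u q) (gradX u) (gradY u)
  have hsum : Su w = Su u + Su (fun p => w p - u p)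
      + 2 * ∑ p : ZMod N × ZMod M,
          (gradX (fun q => w q - u q) p * gradX u p + gradY (fun q => w q - u q) p * gradY u p) := by
    simp only [Su, gradX, gradY, ← Finset.sum_add_distrib, Finset.mul_sum]
    apply Finset.sum_congr rfl
    intro p _
    ring
  rw [hsum, hB]; ring

lemma key (L : ℕ) (vx vy : Fin L → ZMod N × ZMod M → ℝ) (u w : ZMod N × ZMod M → ℝ) :
    Phi L vx vy w = Phi L vx vy u + (L : ℝ) * Su (fun p => w p - u p)
      + 2 * ∑ p : ZMod N × ZMod M,
          (w p - u p) * (divL L vx vy p - (L : ℝ) * divg (gradX u) (gradY u) p) := by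
  rw [Phi_eq L vx vy w, Phi_eq L vx vy u, Su_expand u w]
  have h1 : ∑ p : ZMod N × ZMod M,
      (w p - u p) * (divL L vx vy p - (L : ℝ) * divg (gradX u) (gradY u) p)
      = (∑ p : ZMod N × ZMod M, w p * divL L vx vy p)
        - (∑ p : ZMod N × ZMod M, u p * divL L vx vy p)
        - (L : ℝ) * ∑ p : ZMod N × ZMod M, (w p - u p) * divg (gradX u) (gradY u) p := by
    simp only [Finset.mul_sum, ← Finset.sum_sub_distrib]
    apply Finset.sum_congr rfl
    intro p _
    ring
  rw [h1]
  ring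

end
section
variable {N M : ℕ} [NeZero N] [NeZero M]

lemma const_of_grad_zero (u : ZMod N × ZMod M → ℝ)
    (hx : ∀ p : ZMod N × ZMod M, gradX u p = 0)
    (hy : ∀ p : ZMod N × ZMod M, gradY u p = 0) :
    ∀ p : ZMod N × ZMod M, u p = u (0, 0) := by
  have hx' : ∀ p : ZMod N × ZMod M, u p = u (p.1 - 1, p.2) := by
    intro p; have := hx p; simp only [gradX] at this; linarith
  have hy' : ∀ p : ZMod N × ZMod M, u p = u (p.1, p.2 - 1) := by
    intro p; have := hy p; simp only [gradY] at this; linarith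
  have stepX : ∀ (k : ℕ) (a : ZMod N) (b : ZMod M), u (a, b) = u (a - (k : ZMod N), b) := by
    intro k
    induction k with
    | zero => simp
    | succ n ih =>
      intro a b
      rw [ih a b, hx' (a - (n : ZMod N), b)]
      push_cast
      ring_nf
  have stepY : ∀ (k : ℕ) (a : ZMod N) (b : ZMod M), u (a, b) = u (a, b - (k : ZMod M)) := by
    intro k
    induction k with
    | zero => simp
    | succ n ih =>
      intro a b
      rw [ih a b, hy' (a, b - (n : ZMod M))]
      push_cast
      ring_nf
  intro p
  have h1 : u p = u (0, p.2) := by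
    have := stepX p.1.val p.1 p.2
    rwa [ZMod.natCast_val, ZMod.cast_id, sub_self] at this
  have h2 : u (0, p.2) = u (0, 0) := by
    have := stepY p.2.val 0 p.2
    rwa [ZMod.natCast_val, ZMod.cast_id, sub_self] at this
  rw [h1, h2]

end
section
variable (N M : ℕ) [NeZero N] [NeZero M]

/-- Summation as a linear functional. -/
noncomputable def sumL : (ZMod N × ZMod M → ℝ) →ₗ[ℝ] ℝ where
  toFun u := ∑ p : ZMod N × ZMod M, u p
  map_add' u v := by simp [Finset.sum_add_distrib]
  map_smul' c u := by simp [Finset.mul_sum]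

/-- Discrete Laplacian as a linear map. -/
noncomputable def lap : (ZMod N × ZMod M → ℝ) →ₗ[ℝ] (ZMod N × ZMod M → ℝ) where
  toFun u := divg (gradX u) (gradY u)
  map_add' u v := by funext p; simp only [divg, gradX, gradY, Pi.add_apply]; ring
  map_smul' c u := by
    funext p
    simp only [divg, gradX, gradY, Pi.smul_apply, smul_eq_mul, RingHom.id_apply]
    ring

variable {N M}

lemma lap_mem (u : ZMod N × ZMod M → ℝ) (_ : u ∈ LinearMap.ker (sumL N M)) :
    lap N M u ∈ LinearMap.ker (sumL N M) := by
  simp only [LinearMap.mem_ker, sumL, lap, LinearMap.coe_mk, AddHom.coe_mk]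
  exact sum_divg_zero _ _

lemma grad_zero_of_lap_zero (u : ZMod N × ZMod M → ℝ) (h : lap N M u = 0) :
    (∀ p : ZMod N × ZMod M, gradX u p = 0) ∧ ∀ p : ZMod N × ZMod M, gradY u p = 0 := by
  have h0 : ∑ p : ZMod N × ZMod M, ((gradX u p) ^ 2 + (gradY u p) ^ 2) = 0 := by
    have hp := parts u (gradX u) (gradY u)
    have hz : ∑ p : ZMod N × ZMod M, u p * divg (gradX u) (gradY u) p = 0 := by
      apply Finset.sum_eq_zero
      intro p _
      have : divg (gradX u) (gradY u) p = 0 := by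
        have := congrFun h p
        simpa [lap] using this
      simp [this]
    rw [hz, neg_zero] at hp
    rw [← hp]
    apply Finset.sum_congr rfl
    intro p _
    ring
  have hterm : ∀ p ∈ Finset.univ (α := ZMod N × ZMod M),
      (gradX u p) ^ 2 + (gradY u p) ^ 2 = 0 := by
    exact (Finset.sum_eq_zero_iff_of_nonneg (fun p _ => by positivity)).mp h0
  constructor <;> intro p <;> have := hterm p (Finset.mem_univ p) <;> nlinarith [sq_nonneg (gradX u p), sq_nonneg (gradY u p)]

lemma lap_inj (u : ZMod N × ZMod M → ℝ) (hu : u ∈ LinearMap.ker (sumL N M))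
    (h : lap N M u = 0) : u = 0 := by
  obtain ⟨hx, hy⟩ := grad_zero_of_lap_zero u h
  have hc := const_of_grad_zero u hx hy
  have hsum : (∑ p : ZMod N × ZMod M, u p) = 0 := hu
  have hcard : (∑ p : ZMod N × ZMod M, u p)
      = (Fintype.card (ZMod N × ZMod M) : ℝ) * u (0, 0) := by
    rw [Finset.sum_congr rfl (fun p _ => hc p)]
    simp [Finset.sum_const, Finset.card_univ, nsmul_eq_mul]
  have hcard_pos : (0 : ℝ) < (Fintype.card (ZMod N × ZMod M) : ℝ) := by
    have : 0 < Fintype.card (ZMod N × ZMod M) := Fintype.card_pos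
    exact_mod_cast this
  have h00 : u (0, 0) = 0 := by
    rw [hsum] at hcard
    rcases mul_eq_zero.mp hcard.symm with h | h
    · exact absurd h (ne_of_gt hcard_pos)
    · exact h
  funext p
  rw [hc p, h00]; rfl

/-- Solvability of the discrete Poisson equation on zero-mean functions. -/
lemma lap_surj (d : ZMod N × ZMod M → ℝ) (hd : d ∈ LinearMap.ker (sumL N M)) :
    ∃ u, u ∈ LinearMap.ker (sumL N M) ∧ lap N M u = d := by
  set V := LinearMap.ker (sumL N M)
  let T : V →ₗ[ℝ] V := (lap N M).restrict lap_mem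
  have hinj : Function.Injective T := by
    rw [← LinearMap.ker_eq_bot, LinearMap.ker_eq_bot']
    intro ⟨u, hu⟩ h0
    have : lap N M u = 0 := by
      have := congrArg Subtype.val h0
      simpa [T, LinearMap.restrict_apply] using this
    exact Subtype.ext (lap_inj u hu this)
  have hsurj : Function.Surjective T := LinearMap.surjective_of_injective hinj
  obtain ⟨⟨u, hu⟩, hTu⟩ := hsurj ⟨d, hd⟩
  refine ⟨u, hu, ?_⟩
  have := congrArg Subtype.val hTu
  simpa [T, LinearMap.restrict_apply] using this

end
theorem stmt14 {N M : ℕ} [NeZero N] [NeZero M] (L : ℕ) (hL : 1 ≤ L)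
    (vx vy : Fin L → ZMod N × ZMod M → ℝ) :
    (∃! u : ZMod N × ZMod M → ℝ,
        (∑ p : ZMod N × ZMod M, u p) = 0 ∧
        ∀ w : ZMod N × ZMod M → ℝ, (∑ p : ZMod N × ZMod M, w p) = 0 →
          Phi L vx vy u ≤ Phi L vx vy w) ∧
    (∀ u : ZMod N × ZMod M → ℝ, (∑ p : ZMod N × ZMod M, u p) = 0 →
      ((∀ w : ZMod N × ZMod M → ℝ, (∑ p : ZMod N × ZMod M, w p) = 0 →
          Phi L vx vy u ≤ Phi L vx vy w) ↔
        ∀ p : ZMod N × ZMod M,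
          (L : ℝ) * divg (gradX u) (gradY u) p = divL L vx vy p)) := by
  have hLpos : (0 : ℝ) < (L : ℝ) := by exact_mod_cast Nat.lt_of_lt_of_le Nat.zero_lt_one hL
  have hLne : (L : ℝ) ≠ 0 := ne_of_gt hLpos
  -- characterization of minimizers
  have char : ∀ u : ZMod N × ZMod M → ℝ, (∑ p : ZMod N × ZMod M, u p) = 0 →
      ((∀ w : ZMod N × ZMod M → ℝ, (∑ p : ZMod N × ZMod M, w p) = 0 →
          Phi L vx vy u ≤ Phi L vx vy w) ↔
        ∀ p : ZMod N × ZMod M,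
          (L : ℝ) * divg (gradX u) (gradY u) p = divL L vx vy p) := by
    intro u hu
    constructor
    · -- minimizer → normal equation
      intro hmin
      set e : ZMod N × ZMod M → ℝ :=
        fun p => divL L vx vy p - (L : ℝ) * divg (gradX u) (gradY u) p with he
      have hesum : ∑ p : ZMod N × ZMod M, e p = 0 := by
        simp only [he, Finset.sum_sub_distrib, ← Finset.mul_sum]
        rw [divL, sum_divg_zero, sum_divg_zero]
        ring
      set B : ℝ := ∑ p : ZMod N × ZMod M, (e p) ^ 2 with hBdef
      set A : ℝ := (L : ℝ) * Su e with hAdef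
      have hA : 0 ≤ A := mul_nonneg (le_of_lt hLpos) (Su_nonneg e)
      have hB : 0 ≤ B := Finset.sum_nonneg fun p _ => sq_nonneg _
      set t : ℝ := -B / (A + 1) with htdef
      set w : ZMod N × ZMod M → ℝ := fun p => u p + t * e p with hwdef
      have hw : (∑ p : ZMod N × ZMod M, w p) = 0 := by
        simp only [hwdef, Finset.sum_add_distrib, ← Finset.mul_sum, hesum, hu]
        ring
      have hdiff : (fun p => w p - u p) = fun p => t * e p := by
        funext p; simp [hwdef]
      have hkey := key L vx vy u w
      rw [hdiff] at hkey
      have hSt : Su (fun p => t * e p) = t ^ 2 * Su e := by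
        simp only [Su, gradX, gradY, Finset.mul_sum]
        apply Finset.sum_congr rfl
        intro p _
        ring
      have hcr : ∑ p : ZMod N × ZMod M,
          (w p - u p) * (divL L vx vy p - (L : ℝ) * divg (gradX u) (gradY u) p) = t * B := by
        rw [hBdef, Finset.mul_sum]
        apply Finset.sum_congr rfl
        intro p _
        have h1 : w p - u p = t * e p := by simp [hwdef]
        have h2 : divL L vx vy p - (L : ℝ) * divg (gradX u) (gradY u) p = e p := rfl
        rw [h1, h2]
        ring
      rw [hSt, hcr] at hkey
      have hineq := hmin w hw
      have h0 : 0 ≤ A * t ^ 2 + 2 * (t * B) := by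
        rw [hkey] at hineq
        rw [hAdef]
        nlinarith [hineq]
      have hBzero : B = 0 := by
        by_contra hBne
        have hBpos : 0 < B := lt_of_le_of_ne hB (Ne.symm hBne)
        have hA1 : 0 < A + 1 := by linarith
        have e1 : A * t ^ 2 + 2 * (t * B) = (B ^ 2 * (A - 2 * (A + 1))) / (A + 1) ^ 2 := by
          rw [htdef]; field_simp; ring
        have e2 : (B ^ 2 * (A - 2 * (A + 1))) / (A + 1) ^ 2 < 0 := by
          apply div_neg_of_neg_of_pos
          · nlinarith [mul_pos hBpos hBpos]
          · positivity
        rw [e1] at h0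
        linarith
      intro p
      have hep : e p = 0 := by
        have := (Finset.sum_eq_zero_iff_of_nonneg
          (fun p (_ : p ∈ Finset.univ) => sq_nonneg (e p))).mp hBzero p (Finset.mem_univ p)
        exact pow_eq_zero_iff two_ne_zero |>.mp this
      rw [he] at hep
      have := sub_eq_zero.mp hep
      linarith
    · -- normal equation → minimizer
      intro hne w hw
      have hkey := key L vx vy u w
      have hz : ∑ p : ZMod N × ZMod M,
          (w p - u p) * (divL L vx vy p - (L : ℝ) * divg (gradX u) (gradY u) p) = 0 := by
        apply Finset.sum_eq_zero
        intro p _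
        rw [← hne p]
        ring
      rw [hz] at hkey
      have hs := Su_nonneg (fun p => w p - u p)
      nlinarith [hkey, mul_nonneg (le_of_lt hLpos) hs]
  refine ⟨?_, char⟩
  -- existence of a zero-mean solution of the normal equation
  have hdmem : divL L vx vy ∈ LinearMap.ker (sumL N M) := by
    simp only [LinearMap.mem_ker, sumL, LinearMap.coe_mk, AddHom.coe_mk]
    rw [divL]
    exact sum_divg_zero _ _
  have hscaled : (L : ℝ)⁻¹ • divL L vx vy ∈ LinearMap.ker (sumL N M) :=
    Submodule.smul_mem _ _ hdmem
  obtain ⟨u0, hu0mem, hlap⟩ := lap_surj ((L : ℝ)⁻¹ • divL L vx vy) hscaled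
  have hu0sum : (∑ p : ZMod N × ZMod M, u0 p) = 0 := hu0mem
  have hne0 : ∀ p : ZMod N × ZMod M,
      (L : ℝ) * divg (gradX u0) (gradY u0) p = divL L vx vy p := by
    intro p
    have := congrFun hlap p
    simp only [lap, LinearMap.coe_mk, AddHom.coe_mk, Pi.smul_apply, smul_eq_mul] at this
    rw [this]
    field_simp
  have hmin0 := (char u0 hu0sum).mpr hne0
  refine ⟨u0, ⟨hu0sum, hmin0⟩, ?_⟩
  intro y ⟨hysum, hymin⟩
  have hney := (char y hysum).mp hymin
  have hlapeq : lap N M (y - u0) = 0 := by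
    rw [map_sub]
    funext p
    simp only [Pi.sub_apply, Pi.zero_apply, lap, LinearMap.coe_mk, AddHom.coe_mk]
    have h1 := hney p
    have h2 := hne0 p
    have : (L : ℝ) * divg (gradX y) (gradY y) p = (L : ℝ) * divg (gradX u0) (gradY u0) p := by
      rw [h1, h2]
    have := mul_left_cancel₀ hLne this
    linarith
  have hmem : y - u0 ∈ LinearMap.ker (sumL N M) := by
    have : sumL N M (y - u0) = 0 := by
      rw [map_sub]
      have hy' : sumL N M y = 0 := hysum
      have hu' : sumL N M u0 = 0 := hu0sum
      rw [hy', hu', sub_zero]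
    exact this
  have := lap_inj (y - u0) hmem hlapeq
  exact sub_eq_zero.mp this
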